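/- Let p be a nonempty subword pattern of length m and k ≥ 1. For a word σ of length n let N_p(σ) be the maximum number of pairwise non-overlapping occurrences of p in σ, and let c(n, s) = #{σ : Fin n → Fin k | N_p(σ) = s}. Then in the ring of formal power series in two variables x, y over ℚ: (Σ_{n≥0} Σ_{s≥0} c(n, s)·xⁿ·yˢ) · (1 − y·((k·x − 1)·Ā_p + 1)) = Ā_p, where Ā_p denotes A_p(x;k) = Σ_{n≥0} (number of k-ary words of length n avoiding p)·xⁿ viewed as a power series in x and y. -/

import Mathlib

/-- A word `σ : Fin n → Fin k` has an occurrence of the subword pattern `p : Fin m → Fin l`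
at position `i` if `i + m ≤ n` and the corresponding letters are order-isomorphic to `p`. -/
def OccursAt {m l n k : ℕ} (p : Fin m → Fin l) (σ : Fin n → Fin k) (i : ℕ) : Prop :=
  ∃ h : i + m ≤ n, ∀ a b : Fin m,
    (σ ⟨i + a, lt_of_lt_of_le (Nat.add_lt_add_left a.isLt i) h⟩ <
      σ ⟨i + b, lt_of_lt_of_le (Nat.add_lt_add_left b.isLt i) h⟩) ↔ p a < p b

/-- `σ` avoids the subword pattern `p`. -/
def AvoidsPat {m l n k : ℕ} (p : Fin m → Fin l) (σ : Fin n → Fin k) : Prop :=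
  ∀ i : ℕ, ¬ OccursAt p σ i

/-- `σ` has `t` pairwise non-overlapping occurrences of the subword pattern `p`. -/
def HasNonOverlapping {m l n k : ℕ} (p : Fin m → Fin l) (σ : Fin n → Fin k) (t : ℕ) : Prop :=
  ∃ i : Fin t → ℕ,
    (∀ (j : Fin t) (h : (j : ℕ) + 1 < t), i j + m ≤ i ⟨(j : ℕ) + 1, h⟩) ∧
      ∀ j : Fin t, OccursAt p σ (i j)

/-- `N_p(σ)`: the maximum number of pairwise non-overlapping occurrences of `p` in `σ`. -/
noncomputable def NOcc {m l n k : ℕ} (p : Fin m → Fin l) (σ : Fin n → Fin k) : ℕ :=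
  sSup {t : ℕ | HasNonOverlapping p σ t}

/-- The two-variable generating function `Σ_{n,s} c(n,s) xⁿ yˢ`, where `c(n,s)` is the
number of `k`-ary words of length `n` with exactly `s` non-overlapping occurrences of `p`. -/
noncomputable def Fgen {m l : ℕ} (p : Fin m → Fin l) (k : ℕ) : MvPowerSeries (Fin 2) ℚ :=
  fun d => (Nat.card {σ : Fin (d 0) → Fin k // NOcc p σ = d 1} : ℚ)

/-- `A_p(x;k)` viewed as a two-variable power series (constant in `y`). -/
noncomputable def AbarPat {m l : ℕ} (p : Fin m → Fin l) (k : ℕ) : MvPowerSeries (Fin 2) ℚ :=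
  fun d => if d 1 = 0 then (Nat.card {σ : Fin (d 0) → Fin k // AvoidsPat p σ} : ℚ) else 0

namespace NOP

variable {m l k : ℕ} (p : Fin m → Fin l)

/-- first `j` letters -/
def wtake {n : ℕ} (j : ℕ) (h : j ≤ n) (σ : Fin n → Fin k) : Fin j → Fin k :=
  fun i => σ (Fin.castLE h i)

/-- letters from position `j` on -/
def wdrop {n : ℕ} (j : ℕ) (h : j ≤ n) (σ : Fin n → Fin k) : Fin (n - j) → Fin k :=
  fun i => σ ⟨j + i, by have := i.isLt; omega⟩

def glue {n : ℕ} (j : ℕ) (h : j ≤ n) (τ : Fin j → Fin k) (ρ : Fin (n - j) → Fin k) :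
    Fin n → Fin k :=
  fun i => if hi : (i : ℕ) < j then τ ⟨i, hi⟩ else ρ ⟨(i : ℕ) - j, by have := i.isLt; omega⟩

lemma occursAt_congr {n n' : ℕ} {σ : Fin n → Fin k} {σ' : Fin n' → Fin k} {i i' : ℕ}
    (h : i + m ≤ n) (h' : i' + m ≤ n')
    (he : ∀ a : Fin m,
      σ ⟨i + a, lt_of_lt_of_le (Nat.add_lt_add_left a.isLt i) h⟩ =
      σ' ⟨i' + a, lt_of_lt_of_le (Nat.add_lt_add_left a.isLt i') h'⟩) :
    OccursAt p σ i → OccursAt p σ' i' := by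
  rintro ⟨h0, hocc⟩
  exact ⟨h', fun a b => by rw [← he a, ← he b]; exact hocc a b⟩

lemma occursAt_le {n : ℕ} {σ : Fin n → Fin k} {i : ℕ} (h : OccursAt p σ i) : i + m ≤ n :=
  h.1

lemma occursAt_wtake_iff {n j i : ℕ} (h : j ≤ n) (σ : Fin n → Fin k) (hi : i + m ≤ j) :
    OccursAt p (wtake j h σ) i ↔ OccursAt p σ i := by
  constructor
  · exact occursAt_congr p hi (le_trans hi h) (fun a => rfl)
  · exact occursAt_congr p (le_trans hi h) hi (fun a => rfl)

lemma occursAt_wdrop_iff {n j i : ℕ} (h : j ≤ n) (σ : Fin n → Fin k) (hi : i + m ≤ n - j) :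
    OccursAt p (wdrop j h σ) i ↔ OccursAt p σ (j + i) := by
  have h2 : (j + i) + m ≤ n := by omega
  constructor
  · refine occursAt_congr p hi h2 (fun a => ?_)
    show σ _ = σ _
    congr 1
    exact Fin.ext (by simp; omega)
  · refine occursAt_congr p h2 hi (fun a => ?_)
    show σ _ = σ _
    congr 1
    exact Fin.ext (by simp; omega)

end NOP

namespace NOP

variable {m l k : ℕ} {p : Fin m → Fin l}

lemma wtake_wtake {n a b : ℕ} (hab : a ≤ b) (hbn : b ≤ n) (σ : Fin n → Fin k) :
    wtake a hab (wtake b hbn σ) = wtake a (le_trans hab hbn) σ := rfl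

lemma avoids_wtake {n j : ℕ} (h : j ≤ n) {σ : Fin n → Fin k} (hav : AvoidsPat p σ) :
    AvoidsPat p (wtake j h σ) := by
  intro i hocc
  have hb := occursAt_le p hocc
  exact hav i ((occursAt_wtake_iff p h σ hb).1 hocc)

lemma avoids_wtake_mono {n a b : ℕ} (hab : a ≤ b) (hbn : b ≤ n) {σ : Fin n → Fin k}
    (hav : AvoidsPat p (wtake b hbn σ)) : AvoidsPat p (wtake a (le_trans hab hbn) σ) := by
  rw [← wtake_wtake hab hbn]
  exact avoids_wtake hab hav

lemma hno_zero {n : ℕ} (σ : Fin n → Fin k) : HasNonOverlapping p σ 0 :=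
  ⟨Fin.elim0, fun j => j.elim0, fun j => j.elim0⟩

lemma hno_le (hm : 1 ≤ m) {n t : ℕ} {σ : Fin n → Fin k}
    (h : HasNonOverlapping p σ t) : t ≤ n := by
  obtain ⟨i, hsp, hocc⟩ := h
  rcases Nat.eq_zero_or_pos t with rfl | ht
  · exact Nat.zero_le n
  have key : ∀ v (hv : v < t), v ≤ i ⟨v, hv⟩ := by
    intro v
    induction v with
    | zero => intro _; exact Nat.zero_le _
    | succ w ih =>
      intro hv
      have h1 := hsp ⟨w, by omega⟩ (by simpa using hv)
      have h2 := ih (by omega)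
      simp only at h1
      omega
  have hlast := occursAt_le p (hocc ⟨t - 1, by omega⟩)
  have := key (t - 1) (by omega)
  omega

lemma hno_mono {n t t' : ℕ} {σ : Fin n → Fin k} (h : t' ≤ t)
    (hh : HasNonOverlapping p σ t) : HasNonOverlapping p σ t' := by
  obtain ⟨i, hsp, hocc⟩ := hh
  refine ⟨fun a => i (Fin.castLE h a), fun j hj => ?_, fun j => hocc _⟩
  exact hsp (Fin.castLE h j) (by simpa using lt_of_lt_of_le hj h)

lemma bddAbove_hno (hm : 1 ≤ m) {n : ℕ} (σ : Fin n → Fin k) :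
    BddAbove {t | HasNonOverlapping p σ t} :=
  ⟨n, fun _ ht => hno_le hm ht⟩

lemma le_nOcc (hm : 1 ≤ m) {n t : ℕ} {σ : Fin n → Fin k}
    (h : HasNonOverlapping p σ t) : t ≤ NOcc p σ :=
  le_csSup (bddAbove_hno hm σ) h

lemma nOcc_hno (hm : 1 ≤ m) {n : ℕ} (σ : Fin n → Fin k) :
    HasNonOverlapping p σ (NOcc p σ) :=
  Nat.sSup_mem ⟨0, by exact hno_zero σ⟩ (bddAbove_hno hm σ)

lemma nOcc_le (hm : 1 ≤ m) {n b : ℕ} {σ : Fin n → Fin k}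
    (h : ∀ t, HasNonOverlapping p σ t → t ≤ b) : NOcc p σ ≤ b :=
  csSup_le ⟨0, by exact hno_zero σ⟩ h

lemma hno_one {n i : ℕ} {σ : Fin n → Fin k} (h : OccursAt p σ i) :
    HasNonOverlapping p σ 1 :=
  ⟨fun _ => i, fun j hj => by omega, fun _ => h⟩

lemma nOcc_eq_zero_iff (hm : 1 ≤ m) {n : ℕ} (σ : Fin n → Fin k) :
    NOcc p σ = 0 ↔ AvoidsPat p σ := by
  constructor
  · intro h0 i hocc
    have := le_nOcc hm (hno_one hocc)
    omega
  · intro hav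
    refine Nat.le_zero.1 (nOcc_le hm fun t ht => ?_)
    by_contra hc
    obtain ⟨i, _, hocc⟩ := ht
    exact hav _ (hocc ⟨0, by omega⟩)

end NOP

namespace NOP

variable {m l k : ℕ} {p : Fin m → Fin l}

lemma not_avoids_iff {n : ℕ} (σ : Fin n → Fin k) :
    ¬ AvoidsPat p σ ↔ ∃ i, OccursAt p σ i := by
  simp [AvoidsPat]

lemma nOcc_glue (hm : 1 ≤ m) {n j : ℕ} (hj : j + 1 ≤ n) (σ : Fin n → Fin k)
    (hav : AvoidsPat p (wtake j (by omega) σ))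
    (hnav : ¬ AvoidsPat p (wtake (j + 1) hj σ)) :
    NOcc p σ = NOcc p (wdrop (j + 1) hj σ) + 1 := by
  obtain ⟨i0, hi0⟩ := (not_avoids_iff _).1 hnav
  have hi0b : i0 + m ≤ j + 1 := occursAt_le p hi0
  have hi0occ : OccursAt p σ i0 := (occursAt_wtake_iff p hj σ hi0b).1 hi0
  have hb : ∀ i, OccursAt p σ i → j + 1 ≤ i + m := by
    intro i hocc
    by_contra hc
    have hile : i + m ≤ j := by omega
    exact hav i ((occursAt_wtake_iff p (by omega : j ≤ n) σ hile).2 hocc)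
  set σ' := wdrop (j + 1) hj σ with hσ'
  apply le_antisymm
  · -- NOcc σ ≤ NOcc σ' + 1
    refine nOcc_le hm fun t ht => ?_
    rcases Nat.eq_zero_or_pos t with rfl | htpos
    · omega
    obtain ⟨i, hsp, hocc⟩ := ht
    have hge : ∀ v (hv : v < t), j + 1 ≤ i ⟨v, hv⟩ + m ∧ (1 ≤ v → j + 1 ≤ i ⟨v, hv⟩) := by
      intro v
      induction v with
      | zero => intro hv; exact ⟨hb _ (hocc ⟨0, hv⟩), by omega⟩
      | succ w ih =>
        intro hv
        have h1 := hsp ⟨w, by omega⟩ (by simpa using hv)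
        simp only at h1
        have h2 := (ih (by omega)).1
        exact ⟨by omega, fun _ => by omega⟩
    have hno' : HasNonOverlapping p σ' (t - 1) := by
      refine ⟨fun a => i ⟨(a : ℕ) + 1, by have := a.isLt; omega⟩ - (j + 1), ?_, ?_⟩
      · intro a ha
        have ha1 : (a : ℕ) + 1 < t := by have := a.isLt; omega
        have ha2 : (a : ℕ) + 2 < t := by have := a.isLt; omega
        show i ⟨(a : ℕ) + 1, ha1⟩ - (j + 1) + m ≤ i ⟨(a : ℕ) + 1 + 1, ha2⟩ - (j + 1)
        have h1 := hsp ⟨(a : ℕ) + 1, ha1⟩ (by simpa using ha2)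
        simp only at h1
        have h2 := (hge ((a : ℕ) + 1) ha1).2 (by omega)
        have h3 := (hge ((a : ℕ) + 2) ha2).2 (by omega)
        have h1' : i ⟨(a : ℕ) + 1, ha1⟩ + m ≤ i ⟨(a : ℕ) + 1 + 1, ha2⟩ := h1
        omega
      · intro a
        have ha1 : (a : ℕ) + 1 < t := by have := a.isLt; omega
        show OccursAt p σ' (i ⟨(a : ℕ) + 1, ha1⟩ - (j + 1))
        have hocc1 : OccursAt p σ (i ⟨(a : ℕ) + 1, ha1⟩) := hocc _
        have h2 := (hge ((a : ℕ) + 1) ha1).2 (by omega)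
        have hbnd := occursAt_le p hocc1
        have heq : (j + 1) + (i ⟨(a : ℕ) + 1, ha1⟩ - (j + 1)) = i ⟨(a : ℕ) + 1, ha1⟩ := by omega
        refine (occursAt_wdrop_iff p hj σ (by omega)).2 ?_
        rw [heq]
        exact hocc1
    have := le_nOcc hm hno'
    omega
  · -- NOcc σ' + 1 ≤ NOcc σ
    obtain ⟨i', hsp', hocc'⟩ := nOcc_hno (p := p) hm σ'
    refine le_nOcc hm ?_
    refine ⟨fun a => if ha : (a : ℕ) = 0 then i0 else
      (j + 1) + i' ⟨(a : ℕ) - 1, by have := a.isLt; omega⟩, ?_, ?_⟩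
    · intro a ha
      have ha' : (a : ℕ) < NOcc p σ' + 1 := a.isLt
      rcases Nat.eq_zero_or_pos (a : ℕ) with h0 | h0
      · have hb0 : (a : ℕ) - 1 < NOcc p σ' := by omega
        have hb1 : (a : ℕ) + 1 - 1 < NOcc p σ' := by omega
        show (if _ : (a : ℕ) = 0 then i0 else (j + 1) + i' ⟨(a : ℕ) - 1, hb0⟩) + m ≤
          (if _ : ((a : ℕ) + 1) = 0 then i0 else (j + 1) + i' ⟨(a : ℕ) + 1 - 1, hb1⟩)
        rw [dif_pos h0, dif_neg (by omega)]
        have hbocc := occursAt_le p (hocc' ⟨(a : ℕ) + 1 - 1, hb1⟩)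
        omega
      · have hb0 : (a : ℕ) - 1 < NOcc p σ' := by omega
        have hb1 : (a : ℕ) + 1 - 1 < NOcc p σ' := by omega
        show (if _ : (a : ℕ) = 0 then i0 else (j + 1) + i' ⟨(a : ℕ) - 1, hb0⟩) + m ≤
          (if _ : ((a : ℕ) + 1) = 0 then i0 else (j + 1) + i' ⟨(a : ℕ) + 1 - 1, hb1⟩)
        rw [dif_neg (by omega), dif_neg (by omega)]
        have h1 := hsp' ⟨(a : ℕ) - 1, hb0⟩ (by simp only [Fin.val_mk]; omega)
        simp only at h1
        have hc : (⟨(a : ℕ) + 1 - 1, hb1⟩ : Fin (NOcc p σ')) =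
            ⟨(a : ℕ) - 1 + 1, by omega⟩ := by
          apply Fin.ext; simp only [Fin.val_mk]; omega
        have h2 := congrArg i' hc
        omega
    · intro a
      rcases Nat.eq_zero_or_pos (a : ℕ) with h0 | h0
      · show OccursAt p σ (if _ : (a : ℕ) = 0 then i0 else _)
        rw [dif_pos h0]; exact hi0occ
      · have hb0 : (a : ℕ) - 1 < NOcc p σ' := by have := a.isLt; omega
        show OccursAt p σ
          (if _ : (a : ℕ) = 0 then i0 else (j + 1) + i' ⟨(a : ℕ) - 1, hb0⟩)
        rw [dif_neg (by omega)]
        have hocc1 : OccursAt p σ' (i' ⟨(a : ℕ) - 1, hb0⟩) := hocc' _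
        have hbnd := occursAt_le p hocc1
        exact (occursAt_wdrop_iff p hj σ (by omega)).1 hocc1

end NOP

namespace NOP

variable {m l : ℕ} {p : Fin m → Fin l}

lemma nat_card_sigma {ι : Type*} [Fintype ι] (G : ι → Type*) [∀ i, Finite (G i)] :
    Nat.card ((i : ι) × G i) = ∑ i, Nat.card (G i) := by
  letI : ∀ i, Fintype (G i) := fun i => Fintype.ofFinite _
  rw [Nat.card_eq_fintype_card, Fintype.card_sigma]
  exact Finset.sum_congr rfl fun i _ => Nat.card_eq_fintype_card.symm

lemma card_split {α : Type*} [Finite α] (P Q : α → Prop) :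
    Nat.card {x // P x} = Nat.card {x // P x ∧ Q x} + Nat.card {x // P x ∧ ¬ Q x} := by
  classical
  rw [← Nat.card_sum]
  apply Nat.card_congr
  exact (Equiv.sumCompl (fun x : {x // P x} => Q x.1)).symm.trans
    (Equiv.sumCongr (Equiv.subtypeSubtypeEquivSubtypeInter P Q)
      (Equiv.subtypeSubtypeEquivSubtypeInter P (fun x => ¬ Q x)))

variable (p)

/-- number of avoiding words of length `n` -/
noncomputable def Acnt (k n : ℕ) : ℕ := Nat.card {σ : Fin n → Fin k // AvoidsPat p σ}

/-- number of words of length `n` with exactly `s` non-overlapping occurrences -/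
noncomputable def ccnt (k n s : ℕ) : ℕ := Nat.card {σ : Fin n → Fin k // NOcc p σ = s}

/-- number of words of length `j+1` whose first `j` letters avoid `p` but which do not avoid -/
noncomputable def Dcnt (k j : ℕ) : ℕ :=
  Nat.card {τ : Fin (j + 1) → Fin k // AvoidsPat p (wtake j (Nat.le_succ j) τ) ∧ ¬ AvoidsPat p τ}

variable {p}

lemma Acnt_zero (hm : 1 ≤ m) (k : ℕ) : Acnt p k 0 = 1 := by
  have : ∀ σ : Fin 0 → Fin k, AvoidsPat p σ := by
    intro σ i hocc
    have := occursAt_le p hocc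
    omega
  rw [Acnt, Nat.card_eq_one_iff_unique]
  constructor
  · exact ⟨fun a b => Subtype.ext (funext fun i => i.elim0)⟩
  · exact ⟨⟨fun i => i.elim0, this _⟩⟩

lemma ccnt_zero (hm : 1 ≤ m) (k n : ℕ) : ccnt p k n 0 = Acnt p k n :=
  Nat.card_congr (Equiv.subtypeEquivRight fun σ => nOcc_eq_zero_iff hm σ)

lemma key_count (k j : ℕ) : k * Acnt p k j = Acnt p k (j + 1) + Dcnt p k j := by
  classical
  have h1 : Nat.card {τ : Fin (j + 1) → Fin k // AvoidsPat p (wtake j (Nat.le_succ j) τ)} =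
      k * Acnt p k j := by
    have e : {τ : Fin (j + 1) → Fin k // AvoidsPat p (wtake j (Nat.le_succ j) τ)} ≃
        ({σ : Fin j → Fin k // AvoidsPat p σ} × Fin k) := by
      refine ⟨fun τ => (⟨wtake j (Nat.le_succ j) τ.1, τ.2⟩, τ.1 ⟨j, by omega⟩),
        fun x => ⟨fun i => if h : (i : ℕ) < j then x.1.1 ⟨i, h⟩ else x.2, ?_⟩, ?_, ?_⟩
      · have he : wtake j (Nat.le_succ j)
            (fun i : Fin (j+1) => if h : (i : ℕ) < j then x.1.1 ⟨i, h⟩ else x.2) = x.1.1 := by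
          funext i
          show (if h : (i : ℕ) < j then x.1.1 ⟨i, h⟩ else x.2) = x.1.1 i
          rw [dif_pos i.isLt]
        rw [he]
        exact x.1.2
      · intro τ
        apply Subtype.ext
        funext i
        show (if h : (i : ℕ) < j then wtake j (Nat.le_succ j) τ.1 ⟨i, h⟩
          else τ.1 ⟨j, by omega⟩) = τ.1 i
        by_cases hij : (i : ℕ) < j
        · rw [dif_pos hij]
          exact congrArg τ.1 (Fin.ext rfl)
        · rw [dif_neg hij]
          exact congrArg τ.1 (Fin.ext (by have := i.isLt; simp; omega))
      · intro x
        refine Prod.ext ?_ ?_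
        · apply Subtype.ext
          funext i
          show (if h : (i : ℕ) < j then x.1.1 ⟨i, h⟩ else x.2) = x.1.1 i
          rw [dif_pos i.isLt]
        · show (if h : j < j then _ else x.2) = x.2
          rw [dif_neg (lt_irrefl j)]
    rw [Nat.card_congr e, Nat.card_prod, show Nat.card (Fin k) = k from by simp, Acnt,
      Nat.mul_comm]
  have h2 := card_split (fun τ : Fin (j + 1) → Fin k => AvoidsPat p (wtake j (Nat.le_succ j) τ))
    (fun τ => AvoidsPat p τ)
  have h3 : Nat.card {τ : Fin (j + 1) → Fin k //
      AvoidsPat p (wtake j (Nat.le_succ j) τ) ∧ AvoidsPat p τ} = Acnt p k (j + 1) := by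
    apply Nat.card_congr
    apply Equiv.subtypeEquivRight
    intro τ
    exact ⟨fun h => h.2, fun h => ⟨avoids_wtake (Nat.le_succ j) h, h⟩⟩
  rw [← h1, h2, h3, Dcnt]

end NOP

namespace NOP

variable {m l k : ℕ} {p : Fin m → Fin l}

lemma wtake_glue {n j : ℕ} (h : j ≤ n) (τ : Fin j → Fin k) (ρ : Fin (n - j) → Fin k) :
    wtake j h (glue j h τ ρ) = τ := by
  funext i
  show (if hi : ((Fin.castLE h i : Fin n) : ℕ) < j then τ ⟨_, hi⟩ else _) = τ i
  rw [dif_pos (show ((Fin.castLE h i : Fin n) : ℕ) < j from i.isLt)]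
  exact congrArg τ (Fin.ext rfl)

lemma wdrop_glue {n j : ℕ} (h : j ≤ n) (τ : Fin j → Fin k) (ρ : Fin (n - j) → Fin k) :
    wdrop j h (glue j h τ ρ) = ρ := by
  funext i
  have hnl : ¬ (j + (i : ℕ) < j) := by omega
  show (if hi : j + (i : ℕ) < j then τ ⟨_, hi⟩ else ρ ⟨j + (i : ℕ) - j, _⟩) = ρ i
  rw [dif_neg hnl]
  exact congrArg ρ (Fin.ext (by simp))

lemma glue_take_drop {n j : ℕ} (h : j ≤ n) (σ : Fin n → Fin k) :
    glue j h (wtake j h σ) (wdrop j h σ) = σ := by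
  funext i
  show (if hi : (i : ℕ) < j then wtake j h σ ⟨_, hi⟩ else wdrop j h σ ⟨(i : ℕ) - j, _⟩) = σ i
  by_cases hi : (i : ℕ) < j
  · rw [dif_pos hi]
    exact congrArg σ (Fin.ext rfl)
  · rw [dif_neg hi]
    exact congrArg σ (Fin.ext (by simp; omega))

lemma avoids_wtake_iff' (hm : 1 ≤ m) {n b : ℕ} (hb : b ≤ n) (σ : Fin n → Fin k) :
    AvoidsPat p (wtake b hb σ) ↔
      ∀ jj (h2 : jj + 1 ≤ b), AvoidsPat p (wtake (jj + 1) (le_trans h2 hb) σ) := by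
  constructor
  · intro hav jj h2
    exact avoids_wtake_mono h2 hb hav
  · intro h i hocc
    have hb2 := occursAt_le p hocc
    have hoccσ : OccursAt p σ i := (occursAt_wtake_iff p hb σ hb2).1 hocc
    have h3 : i + m ≤ i + m - 1 + 1 := by omega
    have h4 := h (i + m - 1) (by omega)
    exact h4 i ((occursAt_wtake_iff p _ σ h3).2 hoccσ)

lemma min_iff (hm : 1 ≤ m) {n j1 : ℕ} (h1 : j1 ≤ n) (σ : Fin n → Fin k) :
    AvoidsPat p (wtake j1 h1 σ) ↔
      ∀ jj, jj < j1 → ¬ ∃ h : jj + 1 ≤ n, ¬ AvoidsPat p (wtake (jj + 1) h σ) := by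
  rw [avoids_wtake_iff' hm h1 σ]
  constructor
  · rintro h jj hlt ⟨hh, hna⟩
    exact hna (h jj hlt)
  · intro h jj h2
    by_contra hna
    exact h jj (by omega) ⟨le_trans h2 h1, hna⟩

lemma ccnt_succ (hm : 1 ≤ m) (k n s : ℕ) :
    ccnt p k n (s + 1) =
      ∑ j ∈ Finset.range n, Dcnt p k j * ccnt p k (n - (j + 1)) s := by
  classical
  have hex : ∀ σ : Fin n → Fin k, NOcc p σ = s + 1 →
      ∃ jj, ∃ h : jj + 1 ≤ n, ¬ AvoidsPat p (wtake (jj + 1) h σ) := by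
    intro σ hσ
    have hnav : ¬ AvoidsPat p σ := by
      intro hav
      have h0 := (nOcc_eq_zero_iff hm σ).2 hav
      omega
    obtain ⟨i, hocc⟩ := (not_avoids_iff σ).1 hnav
    have hbnd := occursAt_le p hocc
    have hn1 : 1 ≤ n := by omega
    refine ⟨n - 1, by omega, ?_⟩
    rw [not_avoids_iff]
    exact ⟨i, (occursAt_wtake_iff p (by omega) σ (by omega)).2 hocc⟩
  set T := {σ : Fin n → Fin k // NOcc p σ = s + 1} with hT
  let f : T → Fin n := fun x =>
    ⟨Nat.find (hex x.1 x.2), by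
      have := (Nat.find_spec (hex x.1 x.2)).choose
      omega⟩
  have e0 : T ≃ (j : Fin n) × {x : T // f x = j} := (Equiv.sigmaFiberEquiv f).symm
  have hfiber : ∀ j : Fin n, Nat.card {x : T // f x = j} =
      Dcnt p k j * ccnt p k (n - ((j : ℕ) + 1)) s := by
    intro j
    have hj1 : (j : ℕ) + 1 ≤ n := j.isLt
    rw [Dcnt, ccnt, ← Nat.card_prod]
    apply Nat.card_congr
    refine ⟨fun x => (⟨wtake ((j : ℕ) + 1) hj1 x.1.1, ?_, ?_⟩,
                      ⟨wdrop ((j : ℕ) + 1) hj1 x.1.1, ?_⟩),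
            fun y => ⟨⟨glue ((j : ℕ) + 1) hj1 y.1.1 y.2.1, ?_⟩, ?_⟩, ?_, ?_⟩
    · -- prefix of length j avoids
      have hfind : Nat.find (hex x.1.1 x.1.2) = (j : ℕ) := congrArg Fin.val x.2
      have hmin : ∀ jj, jj < (j : ℕ) →
          ¬ ∃ h : jj + 1 ≤ n, ¬ AvoidsPat p (wtake (jj + 1) h x.1.1) := by
        intro jj hlt
        exact Nat.find_min (hex x.1.1 x.1.2) (by omega)
      exact (min_iff hm (by omega) x.1.1).2 hmin
    · -- length j+1 prefix does not avoid
      have hfind : Nat.find (hex x.1.1 x.1.2) = (j : ℕ) := congrArg Fin.val x.2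
      have hsp := Nat.find_spec (hex x.1.1 x.1.2)
      rw [hfind] at hsp
      obtain ⟨hh, hna⟩ := hsp
      exact hna
    · -- NOcc of the tail is s
      have hfind : Nat.find (hex x.1.1 x.1.2) = (j : ℕ) := congrArg Fin.val x.2
      have hmin : ∀ jj, jj < (j : ℕ) →
          ¬ ∃ h : jj + 1 ≤ n, ¬ AvoidsPat p (wtake (jj + 1) h x.1.1) := by
        intro jj hlt
        exact Nat.find_min (hex x.1.1 x.1.2) (by omega)
      have hav := (min_iff hm (by omega) x.1.1).2 hmin
      have hsp := Nat.find_spec (hex x.1.1 x.1.2)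
      rw [hfind] at hsp
      obtain ⟨hh, hna⟩ := hsp
      have hdec := nOcc_glue hm hj1 x.1.1 hav hna
      have hx := x.1.2
      omega
    · -- NOcc of glued word is s+1
      have hwt := wtake_glue hj1 y.1.1 y.2.1
      have hwd := wdrop_glue hj1 y.1.1 y.2.1
      have hav : AvoidsPat p (wtake (j : ℕ) (by omega)
          (glue ((j : ℕ) + 1) hj1 y.1.1 y.2.1)) := by
        have h2 := y.1.2.1
        rw [← hwt] at h2
        exact h2
      have hnav : ¬ AvoidsPat p (wtake ((j : ℕ) + 1) hj1
          (glue ((j : ℕ) + 1) hj1 y.1.1 y.2.1)) := by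
        rw [hwt]
        exact y.1.2.2
      have hdec := nOcc_glue hm hj1 _ hav hnav
      rw [hdec, hwd, y.2.2]
    · -- the fiber value is j
      apply Fin.ext
      show Nat.find _ = (j : ℕ)
      rw [Nat.find_eq_iff]
      constructor
      · refine ⟨hj1, ?_⟩
        have hwt := wtake_glue hj1 y.1.1 y.2.1
        rw [hwt]
        exact y.1.2.2
      · intro jj hlt
        have hwt := wtake_glue hj1 y.1.1 y.2.1
        have hav : AvoidsPat p (wtake (j : ℕ) (by omega)
            (glue ((j : ℕ) + 1) hj1 y.1.1 y.2.1)) := by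
          have h2 := y.1.2.1
          rw [← hwt] at h2
          exact h2
        exact (min_iff hm (by omega) _).1 hav jj hlt
    · -- left inverse
      intro x
      apply Subtype.ext
      apply Subtype.ext
      exact glue_take_drop hj1 x.1.1
    · -- right inverse
      intro y
      refine Prod.ext (Subtype.ext ?_) (Subtype.ext ?_)
      · exact wtake_glue hj1 y.1.1 y.2.1
      · exact wdrop_glue hj1 y.1.1 y.2.1
  rw [ccnt, Nat.card_congr e0, nat_card_sigma]
  rw [← Fin.sum_univ_eq_sum_range (fun j => Dcnt p k j * ccnt p k (n - (j + 1)) s) n]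
  exact Finset.sum_congr rfl fun j _ => hfiber j

end NOP

namespace NOP

open MvPowerSeries Finsupp Finset

/-- the exponent finsupp `(n, s)` -/
noncomputable def ee (n s : ℕ) : Fin 2 →₀ ℕ := Finsupp.single 0 n + Finsupp.single 1 s

lemma ee_zero (n s : ℕ) : ee n s 0 = n := by
  simp [ee, Finsupp.single_apply]

lemma ee_one (n s : ℕ) : ee n s 1 = s := by
  simp [ee, Finsupp.single_apply]

lemma eq_ee (d : Fin 2 →₀ ℕ) : d = ee (d 0) (d 1) := by
  ext a
  fin_cases a
  · show d 0 = ee (d 0) (d 1) 0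
    rw [ee_zero]
  · show d 1 = ee (d 0) (d 1) 1
    rw [ee_one]

lemma coeff_eq (φ : MvPowerSeries (Fin 2) ℚ) (d : Fin 2 →₀ ℕ) :
    MvPowerSeries.coeff d φ = φ d := rfl

lemma single_one_le_ee (n s : ℕ) : Finsupp.single (1 : Fin 2) 1 ≤ ee n (s + 1) := by
  rw [Finsupp.single_le_iff, ee_one]
  omega

lemma ee_sub_single_one (n s : ℕ) : ee n (s + 1) - Finsupp.single 1 1 = ee n s := by
  ext a
  fin_cases a
  · rw [Finsupp.tsub_apply]
    show ee n (s+1) 0 - Finsupp.single (1 : Fin 2) 1 0 = ee n s 0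
    rw [ee_zero, ee_zero, Finsupp.single_apply, if_neg (by decide)]
    omega
  · rw [Finsupp.tsub_apply]
    show ee n (s+1) 1 - Finsupp.single (1 : Fin 2) 1 1 = ee n s 1
    rw [ee_one, ee_one, Finsupp.single_apply, if_pos rfl]
    omega

lemma ee_sub_single_zero (n s : ℕ) : ee (n + 1) s - Finsupp.single 0 1 = ee n s := by
  ext a
  fin_cases a
  · rw [Finsupp.tsub_apply]
    show ee (n+1) s 0 - Finsupp.single (0 : Fin 2) 1 0 = ee n s 0
    rw [ee_zero, ee_zero, Finsupp.single_apply, if_pos rfl]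
    omega
  · rw [Finsupp.tsub_apply]
    show ee (n+1) s 1 - Finsupp.single (0 : Fin 2) 1 1 = ee n s 1
    rw [ee_one, ee_one, Finsupp.single_apply, if_neg (by decide)]
    omega

lemma coeff_X1_mul (φ : MvPowerSeries (Fin 2) ℚ) (n s : ℕ) :
    MvPowerSeries.coeff (ee n (s + 1)) (MvPowerSeries.X 1 * φ) =
      MvPowerSeries.coeff (ee n s) φ := by
  rw [show (MvPowerSeries.X 1 : MvPowerSeries (Fin 2) ℚ) =
      MvPowerSeries.monomial (Finsupp.single 1 1) 1 from rfl,
    MvPowerSeries.coeff_monomial_mul, if_pos (single_one_le_ee n s), ee_sub_single_one, one_mul]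

lemma coeff_X1_mul_szero (φ : MvPowerSeries (Fin 2) ℚ) (n : ℕ) :
    MvPowerSeries.coeff (ee n 0) (MvPowerSeries.X 1 * φ) = 0 := by
  rw [show (MvPowerSeries.X 1 : MvPowerSeries (Fin 2) ℚ) =
      MvPowerSeries.monomial (Finsupp.single 1 1) 1 from rfl,
    MvPowerSeries.coeff_monomial_mul, if_neg]
  rw [Finsupp.single_le_iff, ee_one]
  omega

lemma coeff_X0_mul (φ : MvPowerSeries (Fin 2) ℚ) (n s : ℕ) :
    MvPowerSeries.coeff (ee (n + 1) s) (MvPowerSeries.X 0 * φ) =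
      MvPowerSeries.coeff (ee n s) φ := by
  rw [show (MvPowerSeries.X 0 : MvPowerSeries (Fin 2) ℚ) =
      MvPowerSeries.monomial (Finsupp.single 0 1) 1 from rfl,
    MvPowerSeries.coeff_monomial_mul, if_pos, ee_sub_single_zero, one_mul]
  rw [Finsupp.single_le_iff, ee_zero]
  omega

lemma coeff_X0_mul_nzero (φ : MvPowerSeries (Fin 2) ℚ) (s : ℕ) :
    MvPowerSeries.coeff (ee 0 s) (MvPowerSeries.X 0 * φ) = 0 := by
  rw [show (MvPowerSeries.X 0 : MvPowerSeries (Fin 2) ℚ) =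
      MvPowerSeries.monomial (Finsupp.single 0 1) 1 from rfl,
    MvPowerSeries.coeff_monomial_mul, if_neg]
  rw [Finsupp.single_le_iff, ee_zero]
  omega

end NOP

namespace NOP

open MvPowerSeries Finsupp Finset

variable {m l : ℕ}

lemma Fgen_apply (p : Fin m → Fin l) (k : ℕ) (d : Fin 2 →₀ ℕ) :
    MvPowerSeries.coeff d (Fgen p k) = (ccnt p k (d 0) (d 1) : ℚ) := rfl

lemma Abar_apply (p : Fin m → Fin l) (k : ℕ) (d : Fin 2 →₀ ℕ) :
    MvPowerSeries.coeff d (AbarPat p k) =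
      if d 1 = 0 then (Acnt p k (d 0) : ℚ) else 0 := rfl

lemma Fgen_ee (p : Fin m → Fin l) (k n s : ℕ) :
    MvPowerSeries.coeff (ee n s) (Fgen p k) = (ccnt p k n s : ℚ) := by
  rw [Fgen_apply, ee_zero, ee_one]

lemma Abar_ee (p : Fin m → Fin l) (k n s : ℕ) :
    MvPowerSeries.coeff (ee n s) (AbarPat p k) =
      if s = 0 then (Acnt p k n : ℚ) else 0 := by
  rw [Abar_apply, ee_zero, ee_one]

lemma coeff_Abar_mul (p : Fin m → Fin l) (k : ℕ) (φ : MvPowerSeries (Fin 2) ℚ) (n s : ℕ) :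
    MvPowerSeries.coeff (ee n s) (AbarPat p k * φ) =
      ∑ j ∈ Finset.range (n + 1),
        (Acnt p k j : ℚ) * MvPowerSeries.coeff (ee (n - j) s) φ := by
  classical
  rw [MvPowerSeries.coeff_mul]
  rw [← Finset.sum_filter_of_ne
    (p := fun pr : (Fin 2 →₀ ℕ) × (Fin 2 →₀ ℕ) => pr.1 1 = 0)
    (fun x hx hfx => by
      by_contra hc
      apply hfx
      have h1 : MvPowerSeries.coeff x.1 (AbarPat p k) = 0 := by
        rw [Abar_apply, if_neg hc]
      rw [h1, zero_mul])]
  refine Finset.sum_nbij' (fun pr => pr.1 0)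
    (fun j => (Finsupp.single 0 j, ee n s - Finsupp.single 0 j)) ?_ ?_ ?_ ?_ ?_
  · intro pr hpr
    beta_reduce
    rw [Finset.mem_filter, Finset.HasAntidiagonal.mem_antidiagonal] at hpr
    have h0 : pr.1 0 + pr.2 0 = n := by
      have := congrArg (fun f : Fin 2 →₀ ℕ => f 0) hpr.1
      simpa [ee_zero] using this
    rw [Finset.mem_range]
    omega
  · intro j hj
    beta_reduce
    rw [Finset.mem_range] at hj
    rw [Finset.mem_filter, Finset.HasAntidiagonal.mem_antidiagonal]
    constructor
    · apply add_tsub_cancel_of_le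
      rw [Finsupp.single_le_iff, ee_zero]
      omega
    · show Finsupp.single (0 : Fin 2) j 1 = 0
      rw [Finsupp.single_apply, if_neg (by decide)]
  · intro pr hpr
    beta_reduce
    rw [Finset.mem_filter, Finset.HasAntidiagonal.mem_antidiagonal] at hpr
    have h1 : Finsupp.single (0 : Fin 2) (pr.1 0) = pr.1 := by
      ext a
      fin_cases a
      · show Finsupp.single (0 : Fin 2) (pr.1 0) 0 = pr.1 0
        rw [Finsupp.single_apply, if_pos rfl]
      · show Finsupp.single (0 : Fin 2) (pr.1 0) 1 = pr.1 1
        rw [Finsupp.single_apply, if_neg (by decide), hpr.2]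
    refine Prod.ext h1 ?_
    show ee n s - Finsupp.single (0 : Fin 2) (pr.1 0) = pr.2
    rw [h1]
    exact (eq_tsub_of_add_eq (by rw [add_comm]; exact hpr.1)).symm
  · intro j hj
    beta_reduce
    show Finsupp.single (0 : Fin 2) j 0 = j
    rw [Finsupp.single_apply, if_pos rfl]
  · intro pr hpr
    beta_reduce
    rw [Finset.mem_filter, Finset.HasAntidiagonal.mem_antidiagonal] at hpr
    have h0 : pr.1 0 + pr.2 0 = n := by
      have := congrArg (fun f : Fin 2 →₀ ℕ => f 0) hpr.1
      simpa [ee_zero] using this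
    have h1c : MvPowerSeries.coeff pr.1 (AbarPat p k) = (Acnt p k (pr.1 0) : ℚ) := by
      rw [Abar_apply, if_pos hpr.2]
    have h2 : pr.2 = ee (n - pr.1 0) s := by
      ext a
      fin_cases a
      · show pr.2 0 = ee (n - pr.1 0) s 0
        rw [ee_zero]
        omega
      · show pr.2 1 = ee (n - pr.1 0) s 1
        rw [ee_one]
        have := congrArg (fun f : Fin 2 →₀ ℕ => f 1) hpr.1
        simp only [Finsupp.add_apply] at this
        rw [ee_one] at this
        omega
    rw [h1c, h2]
  
end NOP

namespace NOP

open MvPowerSeries Finsupp Finset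

variable {m l : ℕ}

lemma coeff_G (p : Fin m → Fin l) (k n s : ℕ) :
    MvPowerSeries.coeff (ee n s) (AbarPat p k * Fgen p k) =
      ∑ j ∈ Finset.range (n + 1), (Acnt p k j : ℚ) * (ccnt p k (n - j) s : ℚ) := by
  rw [coeff_Abar_mul]
  exact Finset.sum_congr rfl fun j _ => by rw [Fgen_ee]

lemma key_series (hm : 1 ≤ m) (p : Fin m → Fin l) (k : ℕ) (hk : 1 ≤ k) :
    Fgen p k + MvPowerSeries.X (1 : Fin 2) * (AbarPat p k * Fgen p k) =
      AbarPat p k + MvPowerSeries.X (1 : Fin 2) * Fgen p k +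
        (k : MvPowerSeries (Fin 2) ℚ) * MvPowerSeries.X (0 : Fin 2) *
          (MvPowerSeries.X (1 : Fin 2) * (AbarPat p k * Fgen p k)) := by
  have hC : (k : MvPowerSeries (Fin 2) ℚ) = (MvPowerSeries.C : ℚ →+* MvPowerSeries (Fin 2) ℚ) (k : ℚ) :=
    (map_natCast ((MvPowerSeries.C : ℚ →+* MvPowerSeries (Fin 2) ℚ)) k).symm
  apply MvPowerSeries.ext
  intro d
  rw [show d = ee (d 0) (d 1) from eq_ee d]
  generalize d 0 = n
  generalize d 1 = s
  simp only [map_add, hC, mul_assoc, MvPowerSeries.coeff_C_mul]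
  cases s with
  | zero =>
    rw [coeff_X1_mul_szero, coeff_X1_mul_szero, Fgen_ee, Abar_ee, if_pos rfl,
      ccnt_zero hm]
    have hz : MvPowerSeries.coeff (ee n 0)
        (MvPowerSeries.X 0 * (MvPowerSeries.X 1 * (AbarPat p k * Fgen p k))) = 0 := by
      cases n with
      | zero => rw [coeff_X0_mul_nzero]
      | succ n' => rw [coeff_X0_mul, coeff_X1_mul_szero]
    rw [hz]
    ring
  | succ s' =>
    rw [coeff_X1_mul, coeff_X1_mul, Fgen_ee, Fgen_ee, Abar_ee, if_neg (by omega), coeff_G]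
    cases n with
    | zero =>
      rw [coeff_X0_mul_nzero]
      have h0 : ccnt p k 0 (s' + 1) = 0 := by
        rw [ccnt_succ hm]
        simp
      rw [h0, Finset.sum_range_one]
      rw [Acnt_zero hm]
      push_cast
      ring
    | succ n' =>
      rw [coeff_X0_mul, coeff_X1_mul, coeff_G]
      have h1 : (ccnt p k (n' + 1) (s' + 1) : ℚ) =
          ∑ j ∈ Finset.range (n' + 1), (Dcnt p k j : ℚ) * (ccnt p k (n' + 1 - (j + 1)) s' : ℚ) := by
        rw [ccnt_succ hm]
        push_cast
        rfl
      have h2 : ∑ j ∈ Finset.range (n' + 1 + 1), (Acnt p k j : ℚ) * (ccnt p k (n' + 1 - j) s' : ℚ) =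
          (∑ j ∈ Finset.range (n' + 1), (Acnt p k (j + 1) : ℚ) *
            (ccnt p k (n' + 1 - (j + 1)) s' : ℚ)) +
          (Acnt p k 0 : ℚ) * (ccnt p k (n' + 1) s' : ℚ) := by
        rw [Finset.sum_range_succ' (fun j => (Acnt p k j : ℚ) * (ccnt p k (n' + 1 - j) s' : ℚ))]
        norm_num
      have h3 : ∑ j ∈ Finset.range (n' + 1),
          ((Dcnt p k j : ℚ) * (ccnt p k (n' - j) s' : ℚ) +
            (Acnt p k (j + 1) : ℚ) * (ccnt p k (n' - j) s' : ℚ)) =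
          ∑ j ∈ Finset.range (n' + 1), (k : ℚ) * ((Acnt p k j : ℚ) * (ccnt p k (n' - j) s' : ℚ)) := by
        refine Finset.sum_congr rfl fun j hj => ?_
        have hkc := key_count (p := p) k j
        have hkcq : (k : ℚ) * (Acnt p k j : ℚ) = (Acnt p k (j + 1) : ℚ) + (Dcnt p k j : ℚ) := by
          exact_mod_cast congrArg (Nat.cast : ℕ → ℚ) hkc
        linear_combination (-(ccnt p k (n' - j) s' : ℚ)) * hkcq
      rw [h1, h2, Acnt_zero hm]
      push_cast
      rw [Finset.sum_add_distrib] at h3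
      rw [Finset.mul_sum]
      linear_combination h3

end NOP

theorem stmt18 (m l : ℕ) (hm : 1 ≤ m) (p : Fin m → Fin l) (k : ℕ) (hk : 1 ≤ k) :
    Fgen p k *
        (1 - MvPowerSeries.X (1 : Fin 2) *
          (((k : MvPowerSeries (Fin 2) ℚ) * MvPowerSeries.X (0 : Fin 2) - 1) *
              AbarPat p k + 1)) =
      AbarPat p k := by
  have key := NOP.key_series hm p k hk
  linear_combination key
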